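/- For t ≥ 0 and k ∈ {0,…,λ} define the refined process q_{λt+k} := p_t·(1 − Σ_{i=1}^{k} γ_i) + Σ_{i=1}^{k} γ_i x_t^i (this is well defined, i.e. the two definitions of q_{λ(t+1)} agree and q_{λt} = p_t). Then (q_j)_{j≥0} is a martingale with respect to its natural filtration, q_0 = 1/2, and for all t ≥ 0 and k ∈ {1,…,λ} one has |q_{λt+k} − q_{λt+k−1}| ≤ |γ_k|. -/

import Mathlib

open MeasureTheory ProbabilityTheory Finset
open scoped ENNReal NNReal

/-- The neutral-bit frequency process of the general univariate EDA with sample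
size `lam` and update weights `γ 0, γ 1, …, γ lam`.  Conditionally on `F t`, the
samples `x t 1, …, x t lam` are i.i.d. Bernoulli with parameter `p t` (encoded
via all conditional mixed moments), and
`p (t+1) = γ 0 * p t + ∑ i ∈ [1..lam], γ i * x t i`. -/
structure NeutralBitEDA {Ω : Type*} [MeasurableSpace Ω] (μ : Measure Ω)
    (lam : ℕ) (γ : ℕ → ℝ) where
  F : Filtration ℕ (inferInstance : MeasurableSpace Ω)
  p : ℕ → Ω → ℝ
  x : ℕ → ℕ → Ω → ℝ
  adapted : Adapted F p
  integrable : ∀ t, Integrable (p t) μ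
  meas_x : ∀ t i, i ∈ Finset.Icc 1 lam → StronglyMeasurable[F (t + 1)] (x t i)
  p_zero : ∀ᵐ ω ∂μ, p 0 ω = 1 / 2
  p_range : ∀ t, ∀ᵐ ω ∂μ, p t ω ∈ Set.Icc (0 : ℝ) 1
  x_binary : ∀ t i, i ∈ Finset.Icc 1 lam → ∀ᵐ ω ∂μ, x t i ω = 0 ∨ x t i ω = 1
  cond_iid : ∀ t, ∀ S : Finset ℕ, S ⊆ Finset.Icc 1 lam →
    μ[fun ω => ∏ i ∈ S, x t i ω | F t] =ᵐ[μ] fun ω => p t ω ^ S.card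
  update : ∀ t, ∀ᵐ ω ∂μ,
    p (t + 1) ω = γ 0 * p t ω + ∑ i ∈ Finset.Icc 1 lam, γ i * x t i ω

set_option linter.unusedSectionVars false
set_option linter.unreachableTactic false
set_option linter.unusedTactic false
set_option linter.unnecessarySimpa false

namespace NeutralBitEDA

variable {Ω : Type*} [MeasurableSpace Ω] {μ : Measure Ω} [IsProbabilityMeasure μ]
  {lam : ℕ} {γ : ℕ → ℝ} (E : NeutralBitEDA μ lam γ)

lemma meas_x' (t i : ℕ) (hi : i ∈ Finset.Icc 1 lam) : Measurable (E.x t i) :=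
  ((E.meas_x t i hi).mono (E.F.le _)).measurable

lemma int_bdd {f : Ω → ℝ} (hm : AEStronglyMeasurable f μ) {C : ℝ}
    (h : ∀ᵐ ω ∂μ, |f ω| ≤ C) : Integrable f μ :=
  (integrable_const C).mono' hm (h.mono fun ω hω => by simpa [Real.norm_eq_abs] using hω)

lemma binary_all (t k : ℕ) (hk : k ≤ lam) :
    ∀ᵐ ω ∂μ, ∀ i ∈ Finset.Icc 1 k, (E.x t i ω = 0 ∨ E.x t i ω = 1) := by
  rw [ae_all_iff]
  intro i
  by_cases hi : i ∈ Finset.Icc 1 k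
  · exact (E.x_binary t i (Finset.Icc_subset_Icc le_rfl hk hi)).mono fun ω h _ => h
  · exact Filter.Eventually.of_forall fun ω h => absurd h hi

lemma x_abs_le (t i : ℕ) (hi : i ∈ Finset.Icc 1 lam) : ∀ᵐ ω ∂μ, |E.x t i ω| ≤ 1 := by
  refine (E.x_binary t i hi).mono fun ω h => ?_
  rcases h with h | h <;> rw [h] <;> norm_num

lemma x_int (t i : ℕ) (hi : i ∈ Finset.Icc 1 lam) : Integrable (E.x t i) μ :=
  int_bdd (E.meas_x' t i hi).aestronglyMeasurable (E.x_abs_le t i hi)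

lemma prod_meas (t : ℕ) {T : Finset ℕ} (hT : T ⊆ Finset.Icc 1 lam) :
    Measurable fun ω => ∏ i ∈ T, E.x t i ω :=
  Finset.measurable_prod T fun i hi => E.meas_x' t i (hT hi)

lemma prod_abs_le (t : ℕ) {T : Finset ℕ} (hT : T ⊆ Finset.Icc 1 lam) :
    ∀ᵐ ω ∂μ, |∏ i ∈ T, E.x t i ω| ≤ 1 := by
  refine (E.binary_all t lam le_rfl).mono fun ω h => ?_
  rw [Finset.abs_prod]
  refine Finset.prod_le_one (fun i _ => abs_nonneg _) fun i hi => ?_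
  rcases h i (hT hi) with h' | h' <;> rw [h'] <;> norm_num

lemma p_abs_le (t : ℕ) : ∀ᵐ ω ∂μ, |E.p t ω| ≤ 1 := by
  refine (E.p_range t).mono fun ω h => ?_
  exact abs_le.2 ⟨by linarith [h.1], h.2⟩

lemma p_meas (t : ℕ) : Measurable (E.p t) :=
  (E.adapted t).mono (E.F.le t) le_rfl

lemma pow_int (t n : ℕ) : Integrable (fun ω => E.p t ω ^ n) μ := by
  refine int_bdd ((E.p_meas t).pow_const n).aestronglyMeasurable (C := 1)
    ((E.p_abs_le t).mono fun ω h => ?_)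
  rw [abs_pow]
  exact pow_le_one₀ (abs_nonneg _) h

lemma prod_mul_int (t : ℕ) {T : Finset ℕ} (hT : T ⊆ Finset.Icc 1 lam) {f : Ω → ℝ}
    (hfm : AEStronglyMeasurable f μ) (hfb : ∀ᵐ ω ∂μ, |f ω| ≤ 1) :
    Integrable (fun ω => (∏ i ∈ T, E.x t i ω) * f ω) μ := by
  refine int_bdd ((E.prod_meas t hT).aestronglyMeasurable.mul hfm) (C := 1) ?_
  filter_upwards [E.prod_abs_le t hT, hfb] with ω h1 h2
  rw [abs_mul]
  exact mul_le_one₀ h1 (abs_nonneg _) h2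

/-- `∫_B ∏_{i∈S} x_i = ∫_B p^|S|` for `B ∈ F t`. -/
lemma setIntegral_prod (t : ℕ) {S : Finset ℕ} (hS : S ⊆ Finset.Icc 1 lam) {B : Set Ω}
    (hB : MeasurableSet[E.F t] B) :
    ∫ ω in B, ∏ i ∈ S, E.x t i ω ∂μ = ∫ ω in B, E.p t ω ^ S.card ∂μ := by
  have hint : Integrable (fun ω => ∏ i ∈ S, E.x t i ω) μ := by
    refine int_bdd (E.prod_meas t hS).aestronglyMeasurable (E.prod_abs_le t hS)
  rw [← setIntegral_condExp (E.F.le t) hint hB]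
  exact setIntegral_congr_ae ((E.F.le t) _ hB) ((E.cond_iid t S hS).mono fun ω h _ => h)

/-- `∫_B (∏_{i∈T} x_i) * p = ∫_B p^{|T|+1}` for `B ∈ F t`. -/
lemma setIntegral_prod_mul_p (t : ℕ) {T : Finset ℕ} (hT : T ⊆ Finset.Icc 1 lam) {B : Set Ω}
    (hB : MeasurableSet[E.F t] B) :
    ∫ ω in B, (∏ i ∈ T, E.x t i ω) * E.p t ω ∂μ = ∫ ω in B, E.p t ω ^ (T.card + 1) ∂μ := by
  have hint : Integrable (fun ω => ∏ i ∈ T, E.x t i ω) μ :=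
    int_bdd (E.prod_meas t hT).aestronglyMeasurable (E.prod_abs_le t hT)
  have hint2 : Integrable (E.p t * fun ω => ∏ i ∈ T, E.x t i ω) μ := by
    have := E.prod_mul_int t hT ((E.p_meas t)).aestronglyMeasurable (E.p_abs_le t)
    refine this.congr (Filter.Eventually.of_forall fun ω => ?_)
    simp [mul_comm]
  have hce : μ[E.p t * fun ω => ∏ i ∈ T, E.x t i ω | E.F t]
      =ᵐ[μ] fun ω => E.p t ω ^ (T.card + 1) := by
    refine (condExp_mul_of_stronglyMeasurable_left (E.adapted t).stronglyMeasurable hint2 hint).trans ?_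
    filter_upwards [E.cond_iid t T hT] with ω h
    simp only [Pi.mul_apply, h]
    ring
  calc ∫ ω in B, (∏ i ∈ T, E.x t i ω) * E.p t ω ∂μ
      = ∫ ω in B, (E.p t * fun ω => ∏ i ∈ T, E.x t i ω) ω ∂μ := by
        refine setIntegral_congr_fun ((E.F.le t) _ hB) fun ω _ => ?_
        simp [mul_comm]
    _ = ∫ ω in B, (μ[E.p t * fun ω => ∏ i ∈ T, E.x t i ω | E.F t]) ω ∂μ :=
        (setIntegral_condExp (E.F.le t) hint2 hB).symm
    _ = ∫ ω in B, E.p t ω ^ (T.card + 1) ∂μ :=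
        setIntegral_congr_ae ((E.F.le t) _ hB) (hce.mono fun ω h _ => h)

end NeutralBitEDA

open scoped Classical

namespace NeutralBitEDA

variable {Ω : Type*} [MeasurableSpace Ω] {μ : Measure Ω} [IsProbabilityMeasure μ]
  {lam : ℕ} {γ : ℕ → ℝ} (E : NeutralBitEDA μ lam γ)

/-- The term-wise identity: for `T ⊆ [1,k]` and `B ∈ F t`,
`∫_B (∏_{i∈T} x_i) x_{k+1} = ∫_B (∏_{i∈T} x_i) p`. -/
lemma term_eq (t k : ℕ) (hk : k < lam) {B : Set Ω} (hB : MeasurableSet[E.F t] B)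
    {T : Finset ℕ} (hT : T ⊆ Finset.Icc 1 k) :
    ∫ ω in B, (∏ i ∈ T, E.x t i ω) * E.x t (k + 1) ω ∂μ
      = ∫ ω in B, (∏ i ∈ T, E.x t i ω) * E.p t ω ∂μ := by
  have hnot : k + 1 ∉ T := fun h => by
    have := (Finset.mem_Icc.1 (hT h)).2; omega
  have hTlam : T ⊆ Finset.Icc 1 lam :=
    hT.trans (Finset.Icc_subset_Icc le_rfl hk.le)
  have hins : insert (k + 1) T ⊆ Finset.Icc 1 lam := by
    refine Finset.insert_subset (Finset.mem_Icc.2 ⟨by omega, by omega⟩) hTlam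
  have h1 : ∫ ω in B, (∏ i ∈ T, E.x t i ω) * E.x t (k + 1) ω ∂μ
      = ∫ ω in B, ∏ i ∈ insert (k + 1) T, E.x t i ω ∂μ := by
    refine setIntegral_congr_fun ((E.F.le t) _ hB) fun ω _ => ?_
    rw [Finset.prod_insert hnot, mul_comm]
  rw [h1, E.setIntegral_prod t hins hB, E.setIntegral_prod_mul_p t hTlam hB,
    Finset.card_insert_of_notMem hnot]

/-- Expansion formula for `∫_{B ∩ ⋂ x_i⁻¹ S_i} f`. -/
lemma setIntegral_pi_formula (t k : ℕ) (hk : k ≤ lam) {B : Set Ω}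
    (hB : MeasurableSet[E.F t] B) {S : ℕ → Set ℝ} (hS : ∀ i, MeasurableSet (S i))
    {f : Ω → ℝ} (hfm : AEStronglyMeasurable f μ) (hfb : ∀ᵐ ω ∂μ, |f ω| ≤ 1) :
    ∫ ω in B ∩ ⋂ i ∈ Finset.Icc 1 k, E.x t i ⁻¹' S i, f ω ∂μ
      = ∑ T ∈ (Finset.Icc 1 k).powerset,
          ((∏ i ∈ T, ((if (1:ℝ) ∈ S i then (1:ℝ) else 0) - (if (0:ℝ) ∈ S i then (1:ℝ) else 0))) *
            ∏ i ∈ Finset.Icc 1 k \ T, (if (0:ℝ) ∈ S i then (1:ℝ) else 0)) *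
          ∫ ω in B, (∏ i ∈ T, E.x t i ω) * f ω ∂μ := by
  have hD : MeasurableSet (⋂ i ∈ Finset.Icc 1 k, E.x t i ⁻¹' S i) := by
    refine MeasurableSet.iInter fun i => MeasurableSet.iInter fun hi => ?_
    exact (E.meas_x' t i (Finset.Icc_subset_Icc le_rfl hk hi)) (hS i)
  rw [← setIntegral_indicator hD]
  have step2 : ∫ ω in B, (⋂ i ∈ Finset.Icc 1 k, E.x t i ⁻¹' S i).indicator f ω ∂μ
      = ∫ ω in B, (∏ i ∈ Finset.Icc 1 k,
          (((if (1:ℝ) ∈ S i then (1:ℝ) else 0) - (if (0:ℝ) ∈ S i then (1:ℝ) else 0)) * E.x t i ω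
            + (if (0:ℝ) ∈ S i then (1:ℝ) else 0))) * f ω ∂μ := by
    refine setIntegral_congr_ae ((E.F.le t) _ hB) ?_
    filter_upwards [E.binary_all t k hk] with ω hbin _
    by_cases hω : ω ∈ ⋂ i ∈ Finset.Icc 1 k, E.x t i ⁻¹' S i
    · rw [Set.indicator_of_mem hω]
      have : ∏ i ∈ Finset.Icc 1 k,
          (((if (1:ℝ) ∈ S i then (1:ℝ) else 0) - (if (0:ℝ) ∈ S i then (1:ℝ) else 0)) * E.x t i ω
            + (if (0:ℝ) ∈ S i then (1:ℝ) else 0)) = 1 := by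
        refine Finset.prod_eq_one fun i hi => ?_
        have hmem : E.x t i ω ∈ S i := Set.mem_iInter₂.1 hω i hi
        rcases hbin i hi with h0 | h1
        · rw [h0] at hmem ⊢
          split_ifs <;> first | norm_num | tauto
        · rw [h1] at hmem ⊢
          split_ifs <;> first | norm_num | tauto
      rw [this, one_mul]
    · rw [Set.indicator_of_notMem hω]
      obtain ⟨i, hi1, hi2, hxS⟩ : ∃ i, 1 ≤ i ∧ i ≤ k ∧ E.x t i ω ∉ S i := by
        simpa [Set.mem_iInter₂] using hω
      have hi : i ∈ Finset.Icc 1 k := Finset.mem_Icc.2 ⟨hi1, hi2⟩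
      have : ∏ i ∈ Finset.Icc 1 k,
          (((if (1:ℝ) ∈ S i then (1:ℝ) else 0) - (if (0:ℝ) ∈ S i then (1:ℝ) else 0)) * E.x t i ω
            + (if (0:ℝ) ∈ S i then (1:ℝ) else 0)) = 0 := by
        refine Finset.prod_eq_zero hi ?_
        rcases hbin i hi with h0 | h1
        · rw [h0] at hxS ⊢
          split_ifs <;> first | norm_num | tauto
        · rw [h1] at hxS ⊢
          split_ifs <;> first | norm_num | tauto
      rw [this, zero_mul]
  rw [step2]
  have step3 : ∫ ω in B, (∏ i ∈ Finset.Icc 1 k,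
          (((if (1:ℝ) ∈ S i then (1:ℝ) else 0) - (if (0:ℝ) ∈ S i then (1:ℝ) else 0)) * E.x t i ω
            + (if (0:ℝ) ∈ S i then (1:ℝ) else 0))) * f ω ∂μ
      = ∫ ω in B, (∑ T ∈ (Finset.Icc 1 k).powerset,
          ((∏ i ∈ T, ((if (1:ℝ) ∈ S i then (1:ℝ) else 0) - (if (0:ℝ) ∈ S i then (1:ℝ) else 0))) *
            ∏ i ∈ Finset.Icc 1 k \ T, (if (0:ℝ) ∈ S i then (1:ℝ) else 0)) *
            ((∏ i ∈ T, E.x t i ω) * f ω)) ∂μ := by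
    refine integral_congr_ae (Filter.Eventually.of_forall fun ω => ?_)
    dsimp only
    rw [Finset.prod_add, Finset.sum_mul]
    refine Finset.sum_congr rfl fun T hT => ?_
    rw [Finset.prod_mul_distrib]
    ring
  rw [step3, integral_finset_sum]
  · exact Finset.sum_congr rfl fun T hT => integral_const_mul _ _
  · intro T hT
    have hTsub : T ⊆ Finset.Icc 1 lam :=
      (Finset.mem_powerset.1 hT).trans (Finset.Icc_subset_Icc le_rfl hk)
    exact ((E.prod_mul_int t hTsub hfm hfb).const_mul _).integrableOn

end NeutralBitEDA

namespace NeutralBitEDA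

variable {Ω : Type*} [MeasurableSpace Ω] {μ : Measure Ω} [IsProbabilityMeasure μ]
  {lam : ℕ} {γ : ℕ → ℝ}

/-- The σ-algebra generated by `F t` together with `x t 1, …, x t k`. -/
def G (E : NeutralBitEDA μ lam γ) (t k : ℕ) : MeasurableSpace Ω :=
  E.F t ⊔ ⨆ i ∈ Finset.Icc 1 k, MeasurableSpace.comap (E.x t i) inferInstance

variable (E : NeutralBitEDA μ lam γ)

lemma G_le (t k : ℕ) (hk : k ≤ lam) : E.G t k ≤ (inferInstance : MeasurableSpace Ω) := by
  refine sup_le (E.F.le t) (iSup₂_le fun i hi => ?_)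
  exact measurable_iff_comap_le.1 (E.meas_x' t i (Finset.Icc_subset_Icc le_rfl hk hi))

lemma F_le_G (t k : ℕ) : (E.F t : MeasurableSpace Ω) ≤ E.G t k := le_sup_left

lemma comap_le_G (t k : ℕ) {i : ℕ} (hi : i ∈ Finset.Icc 1 k) :
    MeasurableSpace.comap (E.x t i) inferInstance ≤ E.G t k :=
  le_trans (le_iSup₂ (f := fun (i : ℕ) (_ : i ∈ Finset.Icc 1 k) =>
    MeasurableSpace.comap (E.x t i) inferInstance) i hi) le_sup_right

/-- Conditional expectation of `x t (k+1)` given `F t` together with `x t 1, …, x t k`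
is `p t`. -/
lemma condexp_x (t k : ℕ) (hk : k < lam) :
    E.p t =ᵐ[μ] μ[E.x t (k + 1) | E.G t k] := by
  have hk1mem : k + 1 ∈ Finset.Icc 1 lam := Finset.mem_Icc.2 ⟨by omega, by omega⟩
  have hGle : E.G t k ≤ (inferInstance : MeasurableSpace Ω) := E.G_le t k hk.le
  -- the generating π-system
  set C : Set (Set Ω) := {A | ∃ B, MeasurableSet[E.F t] B ∧ ∃ S : ℕ → Set ℝ,
    (∀ i, MeasurableSet (S i)) ∧ A = B ∩ ⋂ i ∈ Finset.Icc 1 k, E.x t i ⁻¹' S i} with hCdef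
  have hGen : E.G t k = MeasurableSpace.generateFrom C := by
    refine le_antisymm (sup_le ?_ (iSup₂_le fun i hi => ?_)) ?_
    · intro B hB
      refine MeasurableSpace.measurableSet_generateFrom
        ⟨B, hB, fun _ => Set.univ, fun _ => MeasurableSet.univ, ?_⟩
      simp
    · rintro A ⟨S, hS, rfl⟩
      refine MeasurableSpace.measurableSet_generateFrom
        ⟨Set.univ, MeasurableSet.univ, fun j => if j = i then S else Set.univ,
          fun j => by by_cases hji : j = i <;> simp [hji, hS], ?_⟩
      ext ω
      simp only [Set.mem_inter_iff, Set.mem_univ, true_and, Set.mem_iInter, Set.mem_preimage]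
      constructor
      · intro h j hj
        by_cases hji : j = i
        · subst hji; simpa using h
        · simp [if_neg hji]
      · intro h
        have := h i hi
        simpa using this
    · refine MeasurableSpace.generateFrom_le ?_
      rintro A ⟨B, hB, S, hS, rfl⟩
      refine MeasurableSet.inter (E.F_le_G t k _ hB) ?_
      refine MeasurableSet.iInter fun i => MeasurableSet.iInter fun hi => ?_
      exact E.comap_le_G t k hi _ ⟨S i, hS i, rfl⟩
  have hPi : IsPiSystem C := by
    rintro A1 ⟨B1, hB1, S1, hS1, rfl⟩ A2 ⟨B2, hB2, S2, hS2, rfl⟩ -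
    refine ⟨B1 ∩ B2, hB1.inter hB2, fun i => S1 i ∩ S2 i, fun i => (hS1 i).inter (hS2 i), ?_⟩
    ext ω
    simp only [Set.mem_inter_iff, Set.mem_iInter, Set.mem_preimage, forall_and]
    tauto
  -- basic data
  have hxm : AEStronglyMeasurable (E.x t (k + 1)) μ :=
    (E.meas_x' t (k + 1) hk1mem).aestronglyMeasurable
  have hxb : ∀ᵐ ω ∂μ, |E.x t (k + 1) ω| ≤ 1 := E.x_abs_le t (k + 1) hk1mem
  have hxint : Integrable (E.x t (k + 1)) μ := E.x_int t (k + 1) hk1mem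
  have hpm : AEStronglyMeasurable (E.p t) μ := (E.p_meas t).aestronglyMeasurable
  have hpb : ∀ᵐ ω ∂μ, |E.p t ω| ≤ 1 := E.p_abs_le t
  -- set-integral identity for all G-measurable sets
  have heq : ∀ s : Set Ω, MeasurableSet[E.G t k] s → μ s < ∞ →
      ∫ ω in s, E.p t ω ∂μ = ∫ ω in s, E.x t (k + 1) ω ∂μ := by
    intro s hs _
    refine MeasurableSpace.induction_on_inter
      (C := fun A _ => ∫ ω in A, E.p t ω ∂μ = ∫ ω in A, E.x t (k + 1) ω ∂μ)
      (m := E.G t k) hGen hPi ?_ ?_ ?_ ?_ s hs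
    · simp
    · rintro A ⟨B, hB, S, hS, rfl⟩
      rw [E.setIntegral_pi_formula t k hk.le hB hS hpm hpb,
        E.setIntegral_pi_formula t k hk.le hB hS hxm hxb]
      refine Finset.sum_congr rfl fun T hT => ?_
      rw [E.term_eq t k hk hB (Finset.mem_powerset.1 hT)]
    · intro A hA hPA
      have hA0 : MeasurableSet A := hGle _ hA
      -- total-mass identity
      have htot : ∫ ω, E.p t ω ∂μ = ∫ ω, E.x t (k + 1) ω ∂μ := by
        have h1 := E.setIntegral_prod t (S := {k + 1}) (by simpa using hk1mem)
          (B := Set.univ) MeasurableSet.univ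
        simp only [Finset.prod_singleton, Finset.card_singleton, pow_one,
          Measure.restrict_univ] at h1
        exact h1.symm
      have h1 := integral_add_compl hA0 (E.integrable t)
      have h2 := integral_add_compl hA0 hxint
      linarith
    · intro g hdisj hmeasg hPg
      rw [integral_iUnion (fun i => hGle _ (hmeasg i)) hdisj (E.integrable t).integrableOn,
        integral_iUnion (fun i => hGle _ (hmeasg i)) hdisj hxint.integrableOn]
      exact tsum_congr hPg
  exact ae_eq_condExp_of_forall_setIntegral_eq hGle hxint
    (fun s _ _ => (E.integrable t).integrableOn) heq
    ⟨E.p t, ((E.adapted t).mono (E.F_le_G t k) le_rfl).stronglyMeasurable, Filter.EventuallyEq.rfl⟩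

end NeutralBitEDA

/-- The refined process `q (lam * t + k) = p t * (1 - ∑_{i=1}^k γ i) + ∑_{i=1}^k γ i * x t i`
is well defined (the two definitions of `q (lam * (t+1))` agree and
`q (lam * t) = p t`), starts at `1/2`, is a martingale with respect to its
natural filtration, and has increments bounded by `|q (lam*t+k) - q (lam*t+k-1)| ≤ |γ k|`. -/
theorem neutral_bit_refined_martingale {Ω : Type*} [MeasurableSpace Ω]
    (μ : Measure Ω) [IsProbabilityMeasure μ]
    (lam : ℕ) (hlam : 1 ≤ lam) (γ : ℕ → ℝ)
    (hsum : ∑ i ∈ Finset.range (lam + 1), γ i = 1)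
    (hnz : ∃ i ∈ Finset.Icc 1 lam, γ i ≠ 0)
    (E : NeutralBitEDA μ lam γ)
    (q : ℕ → Ω → ℝ)
    (hq : ∀ j ω, q j ω =
      E.p (j / lam) ω * (1 - ∑ i ∈ Finset.Icc 1 (j % lam), γ i)
        + ∑ i ∈ Finset.Icc 1 (j % lam), γ i * E.x (j / lam) i ω)
    (hqm : ∀ j, StronglyMeasurable (q j)) :
    (∀ t : ℕ, ∀ᵐ ω ∂μ,
      E.p (t + 1) ω =
        E.p t ω * (1 - ∑ i ∈ Finset.Icc 1 lam, γ i)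
          + ∑ i ∈ Finset.Icc 1 lam, γ i * E.x t i ω) ∧
    (∀ t : ℕ, ∀ ω, q (lam * t) ω = E.p t ω) ∧
    (∀ᵐ ω ∂μ, q 0 ω = 1 / 2) ∧
    Martingale q (Filtration.natural q hqm) μ ∧
    (∀ t : ℕ, ∀ k ∈ Finset.Icc 1 lam, ∀ᵐ ω ∂μ,
      |q (lam * t + k) ω - q (lam * t + (k - 1)) ω| ≤ |γ k|) := by
  have hlam0 : 0 < lam := hlam
  have e1 : ∑ i ∈ Finset.Icc 1 lam, γ i = ∑ i ∈ Finset.range lam, γ (i + 1) := by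
    rw [← Finset.Ico_add_one_right_eq_Icc, Finset.sum_Ico_eq_sum_range]
    simp [add_comm]
  have hγ0 : γ 0 = 1 - ∑ i ∈ Finset.Icc 1 lam, γ i := by
    have h2 := Finset.sum_range_succ' γ lam
    rw [hsum] at h2
    rw [e1]
    linarith
  -- Part 1: rewritten update rule
  have part1 : ∀ t : ℕ, ∀ᵐ ω ∂μ,
      E.p (t + 1) ω = E.p t ω * (1 - ∑ i ∈ Finset.Icc 1 lam, γ i)
        + ∑ i ∈ Finset.Icc 1 lam, γ i * E.x t i ω := by
    intro t
    filter_upwards [E.update t] with ω h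
    rw [h, hγ0]
    ring
  -- Part 2: q (lam * t) = p t
  have part2 : ∀ t : ℕ, ∀ ω, q (lam * t) ω = E.p t ω := by
    intro t ω
    rw [hq, Nat.mul_div_cancel_left t hlam0, Nat.mul_mod_right,
      Finset.Icc_eq_empty (by omega)]
    simp
  -- Part 3: q 0 = 1/2
  have part3 : ∀ᵐ ω ∂μ, q 0 ω = 1 / 2 := by
    filter_upwards [E.p_zero] with ω h
    have h2 := part2 0 ω
    rw [Nat.mul_zero] at h2
    rw [h2, h]
  -- The one-step increment identity
  have hstep : ∀ t k, k ∈ Finset.Icc 1 lam → ∀ᵐ ω ∂μ,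
      q (lam * t + k) ω = q (lam * t + (k - 1)) ω + γ k * (E.x t k ω - E.p t ω) := by
    intro t k hk
    obtain ⟨hk1, hk2⟩ := Finset.mem_Icc.1 hk
    rcases eq_or_lt_of_le hk2 with heqk | hlt
    · -- k = lam
      filter_upwards [part1 t] with ω hω
      have e0 : lam * t + k = lam * (t + 1) := by rw [heqk]; ring
      rw [e0, part2 (t + 1) ω, hω, hq (lam * t + (k - 1))]
      have ediv : (lam * t + (k - 1)) / lam = t := by
        rw [Nat.mul_add_div hlam0, Nat.div_eq_of_lt (by omega), Nat.add_zero]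
      have emod : (lam * t + (k - 1)) % lam = k - 1 := by
        rw [Nat.mul_add_mod]
        exact Nat.mod_eq_of_lt (by omega)
      rw [ediv, emod]
      obtain ⟨m, hm⟩ : ∃ m, k = m + 1 := ⟨k - 1, by omega⟩
      subst hm
      simp only [Nat.add_sub_cancel]
      rw [show Finset.Icc 1 lam = Finset.Icc 1 (m + 1) by rw [heqk],
        Finset.sum_Icc_succ_top (by omega) γ,
        Finset.sum_Icc_succ_top (by omega) (fun i => γ i * E.x t i ω)]
      ring
    · -- k < lam
      refine Filter.Eventually.of_forall fun ω => ?_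
      have d1 : (lam * t + k) / lam = t := by
        rw [Nat.mul_add_div hlam0, Nat.div_eq_of_lt hlt, Nat.add_zero]
      have m1 : (lam * t + k) % lam = k := by
        rw [Nat.mul_add_mod]
        exact Nat.mod_eq_of_lt hlt
      have d2 : (lam * t + (k - 1)) / lam = t := by
        rw [Nat.mul_add_div hlam0, Nat.div_eq_of_lt (by omega), Nat.add_zero]
      have m2 : (lam * t + (k - 1)) % lam = k - 1 := by
        rw [Nat.mul_add_mod]
        exact Nat.mod_eq_of_lt (by omega)
      rw [hq (lam * t + k), hq (lam * t + (k - 1)), d1, m1, d2, m2]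
      obtain ⟨m, hm⟩ : ∃ m, k = m + 1 := ⟨k - 1, by omega⟩
      subst hm
      simp only [Nat.add_sub_cancel]
      rw [Finset.sum_Icc_succ_top (by omega) γ,
        Finset.sum_Icc_succ_top (by omega) (fun i => γ i * E.x t i ω)]
      ring
  -- Integrability of q
  have hqint : ∀ j, Integrable (q j) μ := by
    intro j
    have hqj : q j = fun ω => E.p (j / lam) ω * (1 - ∑ i ∈ Finset.Icc 1 (j % lam), γ i)
        + ∑ i ∈ Finset.Icc 1 (j % lam), γ i * E.x (j / lam) i ω := funext (hq j)
    rw [hqj]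
    refine Integrable.add ((E.integrable _).mul_const _) (integrable_finset_sum _ fun i hi => ?_)
    exact (E.x_int _ i (Finset.Icc_subset_Icc le_rfl (Nat.mod_lt _ hlam0).le hi)).const_mul _
  -- q i is measurable w.r.t. the σ-algebra G t k whenever i ≤ lam * t + k, k < lam
  have hmeasG : ∀ t k i, i ≤ lam * t + k → k < lam → Measurable[E.G t k] (q i) := by
    intro t k i hile hk
    have hqi : q i = fun ω => E.p (i / lam) ω * (1 - ∑ i' ∈ Finset.Icc 1 (i % lam), γ i')
        + ∑ i' ∈ Finset.Icc 1 (i % lam), γ i' * E.x (i / lam) i' ω := funext (hq i)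
    rw [hqi]
    have hmod : i % lam < lam := Nat.mod_lt _ hlam0
    have hdiv : i / lam ≤ t := by
      have h := Nat.div_le_div_right (c := lam) hile
      rwa [Nat.mul_add_div hlam0, Nat.div_eq_of_lt hk, Nat.add_zero] at h
    have hpG : Measurable[E.G t k] (E.p (i / lam)) :=
      (E.adapted _).mono (le_trans (E.F.mono hdiv) (E.F_le_G t k)) le_rfl
    have hxG : ∀ i' ∈ Finset.Icc 1 (i % lam), Measurable[E.G t k] (E.x (i / lam) i') := by
      intro i' hi'
      have hi'lam : i' ∈ Finset.Icc 1 lam := Finset.Icc_subset_Icc le_rfl hmod.le hi'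
      rcases lt_or_eq_of_le hdiv with hlt | heqt
      · have hsm : StronglyMeasurable[E.F t] (E.x (i / lam) i') :=
          (E.meas_x (i / lam) i' hi'lam).mono (E.F.mono (Nat.succ_le_of_lt hlt))
        exact (hsm.mono (E.F_le_G t k)).measurable
      · have hmk : i % lam ≤ k := by
          have h := Nat.div_add_mod i lam
          have h2 : lam * (i / lam) = lam * t := by rw [heqt]
          omega
        subst heqt
        exact measurable_iff_comap_le.2
          (E.comap_le_G _ k (Finset.Icc_subset_Icc le_rfl hmk hi'))
    exact (hpG.mul_const _).add
      (Finset.measurable_sum _ fun i' hi' => (hxG i' hi').const_mul _)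
  -- natural filtration is below G
  have hnatle : ∀ j, (Filtration.natural q hqm) j ≤ E.G (j / lam) (j % lam) := by
    intro j
    refine iSup₂_le fun i hi => ?_
    rw [← measurable_iff_comap_le]
    refine hmeasG (j / lam) (j % lam) i ?_ (Nat.mod_lt _ hlam0)
    have h := Nat.div_add_mod j lam
    omega
  -- the martingale property
  have hmart : Martingale q (Filtration.natural q hqm) μ := by
    refine martingale_nat (Filtration.stronglyAdapted_natural hqm) hqint fun j => ?_
    have hkl : j % lam < lam := Nat.mod_lt _ hlam0
    set t := j / lam with ht
    set k := j % lam with hk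
    have hjeq : lam * t + k = j := Nat.div_add_mod j lam
    have hk1 : k + 1 ∈ Finset.Icc 1 lam := Finset.mem_Icc.2 ⟨by omega, by omega⟩
    have hGle := E.G_le t k hkl.le
    have hkey := E.condexp_x t k hkl
    have hxint : Integrable (E.x t (k + 1)) μ := E.x_int t (k + 1) hk1
    have hstep' : q (j + 1) =ᵐ[μ]
        (fun ω => q j ω - γ (k + 1) * E.p t ω) + (γ (k + 1)) • E.x t (k + 1) := by
      have h := hstep t (k + 1) hk1
      have e2 : lam * t + (k + 1) = j + 1 := by omega
      have e3 : (k + 1) - 1 = k := rfl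
      rw [e2, e3, hjeq] at h
      filter_upwards [h] with ω hω
      simp only [Pi.add_apply, Pi.smul_apply, smul_eq_mul]
      rw [hω]
      ring
    have hg1m : StronglyMeasurable[E.G t k] fun ω => q j ω - γ (k + 1) * E.p t ω := by
      refine Measurable.stronglyMeasurable ?_
      exact (hmeasG t k j (by omega) hkl).sub
        (((E.adapted t).mono (E.F_le_G t k) le_rfl).const_mul _)
    have hg1int : Integrable (fun ω => q j ω - γ (k + 1) * E.p t ω) μ :=
      (hqint j).sub ((E.integrable t).const_mul _)
    have hg2int : Integrable ((γ (k + 1)) • E.x t (k + 1)) μ :=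
      hxint.smul (γ (k + 1))
    have hce1 : μ[(fun ω => q j ω - γ (k + 1) * E.p t ω) | E.G t k]
        = fun ω => q j ω - γ (k + 1) * E.p t ω :=
      condExp_of_stronglyMeasurable hGle hg1m hg1int
    have hcondG : μ[q (j + 1) | E.G t k] =ᵐ[μ] q j := by
      refine (condExp_congr_ae (m := E.G t k) hstep').trans ?_
      refine (condExp_add (m := E.G t k) hg1int hg2int).trans ?_
      rw [hce1]
      filter_upwards [condExp_smul (m := E.G t k) (μ := μ) (γ (k + 1)) (E.x t (k + 1)), hkey]
        with ω h2 h3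
      simp only [Pi.add_apply]
      rw [h2]
      simp only [Pi.smul_apply, smul_eq_mul]
      rw [← h3]
      ring
    have h5 : μ[q j | (Filtration.natural q hqm) j] = q j :=
      condExp_of_stronglyMeasurable ((Filtration.natural q hqm).le j)
        ((Filtration.stronglyAdapted_natural hqm) j) (hqint j)
    refine Filter.EventuallyEq.symm ?_
    calc μ[q (j + 1) | (Filtration.natural q hqm) j]
        =ᵐ[μ] μ[μ[q (j + 1) | E.G t k] | (Filtration.natural q hqm) j] :=
          (condExp_condExp_of_le (hnatle j) hGle).symm
      _ =ᵐ[μ] μ[q j | (Filtration.natural q hqm) j] := condExp_congr_ae hcondG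
      _ =ᵐ[μ] q j := by rw [h5]
  refine ⟨part1, part2, part3, hmart, ?_⟩
  -- Part 5: increment bound
  intro t k hk
  filter_upwards [hstep t k hk, E.x_binary t k hk, E.p_range t] with ω h1 h2 h3
  rw [h1, add_sub_cancel_left, abs_mul]
  refine mul_le_of_le_one_right (abs_nonneg _) ?_
  rw [abs_le]
  obtain ⟨hp0, hp1⟩ := h3
  rcases h2 with h | h <;> rw [h] <;> constructor <;> linarith
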